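/- Let G be a graph with no homogeneous set and let X be a proper subset of V(G) that is not a stable (independent) set. Then there exist vertices x1, x2 ∈ X and y ∈ V(G) \ X such that x1–x2–y is an induced path (x1x2, x2y ∈ E(G), x1y ∉ E(G)). -/
import Mathlib


/-- A homogeneous set: `1 < |X| < |V(G)|` and every outside vertex is complete
or anti-complete to `X`. -/
def IsHomogeneousSet {V : Type*} (G : SimpleGraph V) (X : Set V) : Prop :=
  X.Nontrivial ∧ X ≠ Set.univ ∧
    ∀ v ∉ X, (∀ x ∈ X, G.Adj v x) ∨ (∀ x ∈ X, ¬ G.Adj v x)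

/-- In a graph with no homogeneous set, every proper non-stable vertex subset `X`
yields an induced path `x₁ – x₂ – y` with `x₁, x₂ ∈ X` and `y ∉ X`. -/
theorem exists_induced_P3_leaving_set {V : Type*} (G : SimpleGraph V)
    (hhom : ¬ ∃ X : Set V, IsHomogeneousSet G X)
    (X : Set V) (hX : X ≠ Set.univ)
    (hnotstable : ∃ x ∈ X, ∃ y ∈ X, G.Adj x y) :
    ∃ x1 ∈ X, ∃ x2 ∈ X, ∃ y ∉ X, x1 ≠ y ∧
      G.Adj x1 x2 ∧ G.Adj x2 y ∧ ¬ G.Adj x1 y := by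
  by_contra hcon
  push_neg at hcon
  obtain ⟨x, hx, y, hy, hxy⟩ := hnotstable
  -- key: for any edge u–w inside X and v ∉ X, if v ~ w then v ~ u
  have key : ∀ u ∈ X, ∀ w ∈ X, ∀ v ∉ X, G.Adj u w → G.Adj w v → G.Adj u v := by
    intro u hu w hw v hv huw hwv
    by_contra h
    exact h (hcon u hu w hw v hv (fun e => hv (e ▸ hu)) huw hwv)
  -- reachability within X
  set r : V → V → Prop := fun a b => a ∈ X ∧ b ∈ X ∧ G.Adj a b with hr
  set C : Set V := {v | Relation.ReflTransGen r x v} with hC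
  have hxC : x ∈ C := Relation.ReflTransGen.refl
  have hyC : y ∈ C := Relation.ReflTransGen.single ⟨hx, hy, hxy⟩
  have hCX : C ⊆ X := by
    intro v hv
    induction hv with
    | refl => exact hx
    | tail _ h ih => exact h.2.1
  apply hhom
  refine ⟨C, ⟨x, hxC, y, hyC, hxy.ne⟩, ?_, ?_⟩
  · intro h
    obtain ⟨z, hz⟩ := (Set.ne_univ_iff_exists_notMem X).mp hX
    exact hz (hCX (h ▸ Set.mem_univ z))
  · intro v hv
    by_cases hvX : v ∈ X
    · -- v in X but not in C: anticomplete
      refine Or.inr fun c hc hadj => hv ?_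
      exact Relation.ReflTransGen.tail hc ⟨hCX hc, hvX, hadj.symm⟩
    · -- v outside X: adjacency to any c ∈ C equals adjacency to x
      have step : ∀ c ∈ C, (G.Adj v c ↔ G.Adj v x) := by
        intro c hc
        induction hc with
        | refl => exact Iff.rfl
        | @tail b d hb hbd ih =>
          rw [← ih]
          constructor
          · intro h
            exact ((key b hbd.1 d hbd.2.1 v hvX hbd.2.2 h.symm)).symm
          · intro h
            exact ((key d hbd.2.1 b hbd.1 v hvX hbd.2.2.symm h.symm)).symm
      by_cases hvx : G.Adj v x
      · exact Or.inl fun c hc => (step c hc).mpr hvx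
      · exact Or.inr fun c hc h => hvx ((step c hc).mp h)
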